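/- arXiv:1601.03271 — 2 statements merged into one kernel-verified Lean document; each statement's English description precedes it below -/
import Mathlib

section
/- Let A = ⊕_{i∈1..n} A_i and B = ⊕_{j∈1..m} B_j be unions of μ-types, and suppose there exist functions f : {1..n} → {1..m} and g : {1..m} → {1..n} such that A_i ≈ B_{f(i)} for all i and A_{g(j)} ≈ B_j for all j. Then A ≈ B. -/
namespace CAP

/-- μ-types: variables, constants, compounds D @ A, functions A ⊃ B, unions A ⊕ B, recursive μV.A -/
inductive MuTy : Type
  | tvar : ℕ → MuTy
  | tconst : ℕ → MuTy
  | comp : MuTy → MuTy → MuTy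
  | arr : MuTy → MuTy → MuTy
  | union : MuTy → MuTy → MuTy
  | mu : ℕ → MuTy → MuTy
  deriving DecidableEq

namespace MuTy

/-- substitution of `B` for variable `V` -/
def subst (V : ℕ) (B : MuTy) : MuTy → MuTy
  | tvar n => if n = V then B else tvar n
  | tconst c => tconst c
  | comp A₁ A₂ => comp (subst V B A₁) (subst V B A₂)
  | arr A₁ A₂ => arr (subst V B A₁) (subst V B A₂)
  | union A₁ A₂ => union (subst V B A₁) (subst V B A₂)
  | mu W A => if W = V then mu W A else mu W (subst V B A)

/-- `V` occurs in the type only under `comp` or `arr` (if at all) -/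
def Guarded (V : ℕ) : MuTy → Prop
  | tvar n => n ≠ V
  | tconst _ => True
  | comp _ _ => True
  | arr _ _ => True
  | union A₁ A₂ => Guarded V A₁ ∧ Guarded V A₂
  | mu W A => W = V ∨ Guarded V A

/-- contractive μ-types -/
def Contractive : MuTy → Prop
  | tvar _ => True
  | tconst _ => True
  | comp A₁ A₂ => Contractive A₁ ∧ Contractive A₂
  | arr A₁ A₂ => Contractive A₁ ∧ Contractive A₂
  | union A₁ A₂ => Contractive A₁ ∧ Contractive A₂
  | mu V A => Guarded V A ∧ Contractive A

/-- free variables -/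
def fv : MuTy → Set ℕ
  | tvar n => {n}
  | tconst _ => ∅
  | comp A₁ A₂ => fv A₁ ∪ fv A₂
  | arr A₁ A₂ => fv A₁ ∪ fv A₂
  | union A₁ A₂ => fv A₁ ∪ fv A₂
  | mu V A => fv A \ {V}

/-- number of consecutive μ binders at the root -/
def headMu : MuTy → ℕ
  | mu _ A => headMu A + 1
  | _ => 0

end MuTy

/-- inductive μ-type equivalence ≈ -/
inductive MuEq : MuTy → MuTy → Prop
  | refl (A) : MuEq A A
  | trans : MuEq A B → MuEq B C → MuEq A C
  | symm : MuEq A B → MuEq B A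
  | arrCong : MuEq A A' → MuEq B B' → MuEq (.arr A B) (.arr A' B')
  | compCong : MuEq D D' → MuEq A A' → MuEq (.comp D A) (.comp D' A')
  | unionIdem (A) : MuEq (.union A A) A
  | unionComm (A B) : MuEq (.union A B) (.union B A)
  | unionAssoc (A B C) : MuEq (.union A (.union B C)) (.union (.union A B) C)
  | unionCong : MuEq A A' → MuEq B B' → MuEq (.union A B) (.union A' B')
  | muCong : MuEq A B → MuEq (.mu V A) (.mu V B)
  | fold (V A) : MuEq (.mu V A) (MuTy.subst V (.mu V A) A)
  | contr : MuEq A (MuTy.subst V A B) → (MuTy.mu V B).Contractive → MuEq A (.mu V B)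

/-- inductive μ-type subtyping, with a context of variable assumptions -/
inductive MuLe : Set (ℕ × ℕ) → MuTy → MuTy → Prop
  | refl (S A) : MuLe S A A
  | hyp : (V, W) ∈ S → MuLe S (.tvar V) (.tvar W)
  | eq : MuEq A B → MuLe S A B
  | trans : MuLe S A B → MuLe S B C → MuLe S A C
  | compCong : MuLe S D D' → MuLe S A A' → MuLe S (.comp D A) (.comp D' A')
  | func : MuLe S A' A → MuLe S B B' → MuLe S (.arr A B) (.arr A' B')
  | unionL : MuLe S A C → MuLe S B C → MuLe S (.union A B) C
  | unionR1 : MuLe S A B → MuLe S A (.union B C)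
  | unionR2 : MuLe S A C → MuLe S A (.union B C)
  | recRule : MuLe (insert (V, W) S) A B → W ∉ A.fv → V ∉ B.fv →
      MuLe S (.mu V A) (.mu W B)

/-- binary association trees of unions, used to express n-fold unions with arbitrary association -/
inductive UTree : Type
  | leaf : MuTy → UTree
  | node : UTree → UTree → UTree

def UTree.toTy : UTree → MuTy
  | .leaf A => A
  | .node l r => .union l.toTy r.toTy

def UTree.leaves : UTree → List MuTy
  | .leaf A => [A]
  | .node l r => l.leaves ++ r.leaves

/-! ## Infinite types as trees -/

inductive Atom : Type
  | var : ℕ → Atom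
  | const : ℕ → Atom
  | bullet : Atom
  deriving DecidableEq

inductive Lab : Type
  | atom : Atom → Lab
  | comp : Lab
  | arr : Lab
  | union : Lab
  deriving DecidableEq

def Lab.IsBinary : Lab → Prop
  | .comp => True
  | .arr => True
  | .union => True
  | .atom _ => False

/-- possibly infinite trees: partial labelling of positions -/
abbrev ITree : Type := List Bool → Option Lab

namespace ITree

def child (A : ITree) (b : Bool) : ITree := fun π => A (b :: π)

/-- well-formed infinite types: rooted, prefix-closed with binary branching,
and no infinite branch consisting solely of ⊕ -/
def Wf (A : ITree) : Prop :=
  (A []).isSome ∧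
  (∀ π b, (A (π ++ [b])).isSome ↔ ∃ l, A π = some l ∧ l.IsBinary) ∧
  (∀ (π : List Bool) (f : ℕ → Bool), ∃ n, A (π ++ (List.range n).map f) ≠ some Lab.union)

end ITree

/-- maximal union decomposition: the list of non-union components of a tree -/
inductive UnionComps : ITree → List ITree → Prop
  | nonUnion (A : ITree) : A [] ≠ some Lab.union → UnionComps A [A]
  | union (A : ITree) (l r : List ITree) :
      A [] = some Lab.union →
      UnionComps (A.child false) l → UnionComps (A.child true) r →
      UnionComps A (l ++ r)

/-- the rule functional for coinductive tree equivalence -/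
def EqF (R : ITree → ITree → Prop) (A B : ITree) : Prop :=
  (∃ a : Atom, A [] = some (Lab.atom a) ∧ B [] = some (Lab.atom a)) ∨
  (A [] = some Lab.comp ∧ B [] = some Lab.comp ∧
    R (A.child false) (B.child false) ∧ R (A.child true) (B.child true)) ∨
  (A [] = some Lab.arr ∧ B [] = some Lab.arr ∧
    R (A.child false) (B.child false) ∧ R (A.child true) (B.child true)) ∨
  (∃ (la lb : List ITree), UnionComps A la ∧ UnionComps B lb ∧
    2 < la.length + lb.length ∧
    (∃ f : Fin la.length → Fin lb.length, ∀ i, R (la.get i) (lb.get (f i))) ∧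
    (∃ g : Fin lb.length → Fin la.length, ∀ j, R (la.get (g j)) (lb.get j)))

/-- coinductive tree equivalence ≈_T : the greatest fixed point of `EqF` -/
def TreeEq (A B : ITree) : Prop :=
  ∃ R : ITree → ITree → Prop, (∀ X Y, R X Y → EqF R X Y) ∧ R A B

/-- the rule functional for coinductive tree subtyping -/
def LeF (R : ITree → ITree → Prop) (A B : ITree) : Prop :=
  (∃ a : Atom, A [] = some (Lab.atom a) ∧ B [] = some (Lab.atom a)) ∨
  (A [] = some Lab.comp ∧ B [] = some Lab.comp ∧
    R (A.child false) (B.child false) ∧ R (A.child true) (B.child true)) ∨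
  (A [] = some Lab.arr ∧ B [] = some Lab.arr ∧
    R (B.child false) (A.child false) ∧ R (A.child true) (B.child true)) ∨
  (∃ (la lb : List ITree), UnionComps A la ∧ UnionComps B lb ∧
    2 < la.length + lb.length ∧
    (∃ f : Fin la.length → Fin lb.length, ∀ i, R (la.get i) (lb.get (f i))))

/-- coinductive tree subtyping ≤_T : the greatest fixed point of `LeF` -/
def TreeLe (A B : ITree) : Prop :=
  ∃ R : ITree → ITree → Prop, (∀ X Y, R X Y → LeF R X Y) ∧ R A B

open Classical in
/-- tree substitution of tree `B` for the variable `V` -/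
noncomputable def substT (V : ℕ) (B A : ITree) : ITree := fun π =>
  if h : ∃ ps : List Bool × List Bool,
      π = ps.1 ++ ps.2 ∧ A ps.1 = some (Lab.atom (Atom.var V))
  then B (Classical.choose h).2
  else A π

/-- the single-node tree consisting of an atom -/
def atomTree (a : Atom) : ITree := fun π => if π = [] then some (Lab.atom a) else none

/-- a tree with binary root label `l` and subtrees `A₁`, `A₂` -/
def binTree (l : Lab) (A₁ A₂ : ITree) : ITree := fun π =>
  match π with
  | [] => some l
  | false :: π' => A₁ π'
  | true :: π' => A₂ π'

/-- effective depth of a position: union nodes do not consume depth -/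
def edepth (A : ITree) : List Bool → ℕ
  | [] => 0
  | b :: π => (if A [] = some Lab.union then 0 else 1) + edepth (A.child b) π

open Classical in
/-- truncation of a tree at depth `k`; cut points are replaced by the constant • -/
noncomputable def cut (k : ℕ) (A : ITree) : ITree := fun π =>
  if ∀ p, p <+: π → p ≠ π → edepth A p < k then
    (if edepth A π < k then A π
     else if (A π).isSome then some (Lab.atom Atom.bullet) else none)
  else none

/-- labels of the tree interpretation of a μ-type (μ is unfolded completely) -/
inductive HasLab : MuTy → List Bool → Lab → Prop
  | tvar (n) : HasLab (.tvar n) [] (.atom (.var n))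
  | tconst (c) : HasLab (.tconst c) [] (.atom (.const c))
  | compRoot (A B) : HasLab (.comp A B) [] .comp
  | compL : HasLab A π l → HasLab (.comp A B) (false :: π) l
  | compR : HasLab B π l → HasLab (.comp A B) (true :: π) l
  | arrRoot (A B) : HasLab (.arr A B) [] .arr
  | arrL : HasLab A π l → HasLab (.arr A B) (false :: π) l
  | arrR : HasLab B π l → HasLab (.arr A B) (true :: π) l
  | unionRoot (A B) : HasLab (.union A B) [] .union
  | unionL : HasLab A π l → HasLab (.union A B) (false :: π) l
  | unionR : HasLab B π l → HasLab (.union A B) (true :: π) l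
  | mu : HasLab (MuTy.subst V (.mu V A) A) π l → HasLab (.mu V A) π l

open Classical in
/-- the tree interpretation ⟦·⟧ of μ-types -/
noncomputable def interp (A : MuTy) : ITree := fun π =>
  if h : ∃ l, HasLab A π l then some (Classical.choose h) else none

/-- application of a parallel substitution to a μ-type -/
def applyS (σ : ℕ → MuTy) : MuTy → MuTy
  | .tvar n => σ n
  | .tconst c => .tconst c
  | .comp A B => .comp (applyS σ A) (applyS σ B)
  | .arr A B => .arr (applyS σ A) (applyS σ B)
  | .union A B => .union (applyS σ A) (applyS σ B)
  | .mu V A => .mu V (applyS (Function.update σ V (.tvar V)) A)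

/-- outermost type constructor (head μ binders are unfolded/skipped) -/
inductive HeadC : Type
  | hvar : ℕ → HeadC
  | hconst : ℕ → HeadC
  | hcomp : HeadC
  | harr : HeadC
  | hunion : HeadC
  deriving DecidableEq

def headOf : MuTy → HeadC
  | .tvar n => .hvar n
  | .tconst c => .hconst c
  | .comp _ _ => .hcomp
  | .arr _ _ => .harr
  | .union _ _ => .hunion
  | .mu _ A => headOf A

/-- non-union μ-types: after unfolding head μ binders the top constructor is not ⊕ -/
def NonUnion : MuTy → Prop
  | .union _ _ => False
  | .mu _ A => NonUnion A
  | _ => True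

/-- union contexts U ::= □ | U ⊕ A | A ⊕ U -/
inductive UCtx : Type
  | hole : UCtx
  | left : UCtx → MuTy → UCtx
  | right : MuTy → UCtx → UCtx

def UCtx.fill : UCtx → MuTy → MuTy
  | .hole, A => A
  | .left U B, A => .union (U.fill A) B
  | .right B U, A => .union B (U.fill A)

end CAP

namespace CAP

/-- absorption order: `X ⊑ Y` iff `X ⊕ Y ≈ Y` -/
def Sub (X Y : MuTy) : Prop := MuEq (.union X Y) Y

lemma sub_refl (X : MuTy) : Sub X X := MuEq.unionIdem X

lemma sub_congL {X X' T : MuTy} (h : MuEq X X') (hs : Sub X T) : Sub X' T :=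
  MuEq.trans (MuEq.unionCong (MuEq.symm h) (MuEq.refl T)) hs

lemma sub_unionR1 {X Y : MuTy} (Z : MuTy) (h : Sub X Y) : Sub X (.union Y Z) :=
  MuEq.trans (MuEq.unionAssoc X Y Z) (MuEq.unionCong h (MuEq.refl Z))

lemma sub_unionR2 {X Z : MuTy} (Y : MuTy) (h : Sub X Z) : Sub X (.union Y Z) := by
  refine MuEq.trans (MuEq.unionCong (MuEq.refl X) (MuEq.unionComm Y Z)) ?_
  refine MuEq.trans (MuEq.unionAssoc X Z Y) ?_
  exact MuEq.trans (MuEq.unionCong h (MuEq.refl Y)) (MuEq.unionComm Z Y)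

lemma sub_unionL {X Y T : MuTy} (h1 : Sub X T) (h2 : Sub Y T) :
    Sub (.union X Y) T := by
  refine MuEq.trans (MuEq.symm (MuEq.unionAssoc X Y T)) ?_
  exact MuEq.trans (MuEq.unionCong (MuEq.refl X) h2) h1

lemma sub_antisymm {X Y : MuTy} (h1 : Sub X Y) (h2 : Sub Y X) : MuEq X Y :=
  MuEq.trans (MuEq.trans (MuEq.symm h2) (MuEq.unionComm Y X)) h1

lemma mem_sub {X : MuTy} : ∀ t : UTree, X ∈ t.leaves → Sub X t.toTy
  | .leaf A, h => by
      simp [UTree.leaves] at h; subst h; exact sub_refl _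
  | .node l r, h => by
      simp [UTree.leaves] at h
      rcases h with h | h
      · exact sub_unionR1 _ (mem_sub l h)
      · exact sub_unionR2 _ (mem_sub r h)

lemma all_sub {T : MuTy} : ∀ s : UTree, (∀ X ∈ s.leaves, Sub X T) → Sub s.toTy T
  | .leaf A, h => h A (by simp [UTree.leaves])
  | .node l r, h => by
      refine sub_unionL (all_sub l ?_) (all_sub r ?_) <;>
        (intro X hX; exact h X (by simp [UTree.leaves, hX]))

lemma tree_sub {s t : UTree}
    (h : ∀ X ∈ s.leaves, ∃ Y ∈ t.leaves, MuEq X Y) : Sub s.toTy t.toTy := by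
  refine all_sub s (fun X hX => ?_)
  obtain ⟨Y, hY, hXY⟩ := h X hX
  exact sub_congL (MuEq.symm hXY) (mem_sub t hY)

/-- if there are f and g matching the summands of two unions up to ≈ in
both directions, then the unions are equivalent. -/
theorem stmt3 (n m : ℕ) (A : Fin n → MuTy) (B : Fin m → MuTy)
    (f : Fin n → Fin m) (g : Fin m → Fin n)
    (hf : ∀ i, MuEq (A i) (B (f i))) (hg : ∀ j, MuEq (A (g j)) (B j))
    (tA tB : UTree) (hA : tA.leaves = List.ofFn A) (hB : tB.leaves = List.ofFn B) :
    MuEq tA.toTy tB.toTy := by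
  refine sub_antisymm (tree_sub ?_) (tree_sub ?_)
  · intro X hX
    rw [hA, List.mem_ofFn] at hX
    obtain ⟨i, rfl⟩ := hX
    exact ⟨B (f i), by rw [hB, List.mem_ofFn]; exact ⟨f i, rfl⟩, hf i⟩
  · intro Y hY
    rw [hB, List.mem_ofFn] at hY
    obtain ⟨j, rfl⟩ := hY
    exact ⟨A (g j), by rw [hA, List.mem_ofFn]; exact ⟨g j, rfl⟩, MuEq.symm (hg j)⟩

end CAP
end

section
/- The coinductively defined equivalence relation ≈_T on possibly infinite types (trees over atoms, @, ⊃, and the union connector ⊕) is an equivalence relation: it is reflexive, symmetric, and transitive. -/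
namespace CAP

lemma EqF_mono {R R' : ITree → ITree → Prop} (h : ∀ X Y, R X Y → R' X Y)
    {A B : ITree} (hab : EqF R A B) : EqF R' A B := by
  rcases hab with hatom | ⟨ha, hb, h1, h2⟩ | ⟨ha, hb, h1, h2⟩ |
    ⟨la, lb, hla, hlb, hlen, ⟨f, hf⟩, ⟨g, hg⟩⟩
  · exact Or.inl hatom
  · exact Or.inr (Or.inl ⟨ha, hb, h _ _ h1, h _ _ h2⟩)
  · exact Or.inr (Or.inr (Or.inl ⟨ha, hb, h _ _ h1, h _ _ h2⟩))
  · exact Or.inr (Or.inr (Or.inr ⟨la, lb, hla, hlb, hlen,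
      ⟨f, fun i => h _ _ (hf i)⟩, ⟨g, fun j => h _ _ (hg j)⟩⟩))

lemma TreeEq.unfold {A B : ITree} (h : TreeEq A B) : EqF TreeEq A B := by
  obtain ⟨R, hR, hAB⟩ := h
  exact EqF_mono (fun X Y hxy => ⟨R, hR, hxy⟩) (hR A B hAB)

lemma UnionComps.ne_nil {A : ITree} {l : List ITree} (h : UnionComps A l) : l ≠ [] := by
  induction h with
  | nonUnion => simp
  | union A l r _ _ _ ihl ihr => simp [ihl]

lemma UnionComps.unique {A : ITree} {l l' : List ITree}
    (h : UnionComps A l) (h' : UnionComps A l') : l = l' := by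
  induction h generalizing l' with
  | nonUnion A hA =>
    cases h' with
    | nonUnion => rfl
    | union _ _ _ hu => exact absurd hu hA
  | union A l r hA _ _ ihl ihr =>
    cases h' with
    | nonUnion _ hA' => exact absurd hA hA'
    | union _ l2 r2 _ hl2 hr2 => rw [ihl hl2, ihr hr2]


lemma UnionComps.comp_nonUnion {A : ITree} {l : List ITree} (h : UnionComps A l) :
    ∀ X ∈ l, X [] ≠ some Lab.union := by
  induction h with
  | nonUnion A hA => intro X hX; simp at hX; subst hX; exact hA
  | union A l r _ _ _ ihl ihr =>
    intro X hX
    rcases List.mem_append.mp hX with hX | hX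
    · exact ihl X hX
    · exact ihr X hX

lemma UnionComps.two_le {A : ITree} {l : List ITree} (h : UnionComps A l)
    (hu : A [] = some Lab.union) : 2 ≤ l.length := by
  cases h with
  | nonUnion _ hA => exact absurd hu hA
  | union _ l r _ hl hr =>
    have h1 := List.length_pos_iff.mpr hl.ne_nil
    have h2 := List.length_pos_iff.mpr hr.ne_nil
    simp only [List.length_append]; omega

lemma UnionComps.singleton {A X : ITree} (h : UnionComps A [X]) :
    X = A ∧ A [] ≠ some Lab.union := by
  have hA : A [] ≠ some Lab.union := by
    intro hu
    have := h.two_le hu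
    simp at this
  have := (UnionComps.nonUnion A hA).unique h
  simp at this
  exact ⟨this.symm, hA⟩

lemma UnionComps.of_nonUnion {A : ITree} {l : List ITree}
    (h : UnionComps A l) (hA : A [] ≠ some Lab.union) : l = [A] := by
  cases h with
  | nonUnion => rfl
  | union _ _ _ hu => exact absurd hu hA

/-- if both sides have non-union roots, a TreeEq must come from a structural clause -/
lemma TreeEq.structural {A B : ITree} (h : TreeEq A B)
    (hA : A [] ≠ some Lab.union) (hB : B [] ≠ some Lab.union) :
    (∃ a : Atom, A [] = some (Lab.atom a) ∧ B [] = some (Lab.atom a)) ∨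
    (A [] = some Lab.comp ∧ B [] = some Lab.comp ∧
      TreeEq (A.child false) (B.child false) ∧ TreeEq (A.child true) (B.child true)) ∨
    (A [] = some Lab.arr ∧ B [] = some Lab.arr ∧
      TreeEq (A.child false) (B.child false) ∧ TreeEq (A.child true) (B.child true)) := by
  rcases h.unfold with h1 | h2 | h3 | ⟨la, lb, hla, hlb, hlen, _⟩
  · exact Or.inl h1
  · exact Or.inr (Or.inl h2)
  · exact Or.inr (Or.inr h3)
  · exfalso
    rw [hla.of_nonUnion hA, hlb.of_nonUnion hB] at hlen
    simp at hlen

/-! ### well-formedness of children and existence of union decompositions -/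

lemma ITree.Wf.child {A : ITree} (hA : A.Wf) {l : Lab} (hl : A [] = some l)
    (hb : l.IsBinary) (b : Bool) : (A.child b).Wf := by
  obtain ⟨h1, h2, h3⟩ := hA
  refine ⟨?_, ?_, ?_⟩
  · have := (h2 [] b).mpr ⟨l, hl, hb⟩
    simpa [ITree.child] using this
  · intro π b'
    have := h2 (b :: π) b'
    simpa [ITree.child] using this
  · intro π f
    have := h3 (b :: π) f
    simpa [ITree.child] using this

lemma UnionComps.wf {A : ITree} {l : List ITree} (h : UnionComps A l) (hA : A.Wf) :
    ∀ X ∈ l, X.Wf := by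
  induction h with
  | nonUnion A _ => intro X hX; simp at hX; subst hX; exact hA
  | union A l r hu _ _ ihl ihr =>
    intro X hX
    rcases List.mem_append.mp hX with hX | hX
    · exact ihl (hA.child hu trivial false) X hX
    · exact ihr (hA.child hu trivial true) X hX

/-- shift a tree by a path -/
def ITree.childs (A : ITree) (p : List Bool) : ITree := fun π => A (p ++ π)

lemma ITree.childs_append (A : ITree) (p : List Bool) (b : Bool) :
    (A.childs p).child b = A.childs (p ++ [b]) := by
  funext π
  simp [ITree.childs, ITree.child]

open Classical in
lemma exists_unionComps {A : ITree} (hA : A.Wf) : ∃ l, UnionComps A l := by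
  by_contra hcon
  -- key step: a non-decomposable tree has union root and a non-decomposable child
  have key : ∀ X : ITree, ¬(∃ l, UnionComps X l) →
      X [] = some Lab.union ∧ ¬(∃ l, UnionComps (X.child (
        if (∃ l, UnionComps (X.child false) l) then true else false)) l) := by
    intro X hX
    have hu : X [] = some Lab.union := by
      by_contra hu
      exact hX ⟨[X], UnionComps.nonUnion X hu⟩
    refine ⟨hu, ?_⟩
    by_cases h0 : ∃ l, UnionComps (X.child false) l
    · simp only [h0, if_true]
      intro h1
      obtain ⟨l, hl⟩ := h0
      obtain ⟨r, hr⟩ := h1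
      exact hX ⟨l ++ r, UnionComps.union X l r hu hl hr⟩
    · simpa only [h0, if_false] using h0
  -- build the bad branch
  let pick : List Bool → Bool := fun p =>
    if (∃ l, UnionComps ((A.childs p).child false) l) then true else false
  let path : ℕ → List Bool := fun n => Nat.rec [] (fun _ p => p ++ [pick p]) n
  have hpath : ∀ n, ¬(∃ l, UnionComps (A.childs (path n)) l) := by
    intro n
    induction n with
    | zero =>
      have : A.childs [] = A := by funext π; simp [ITree.childs]
      rw [show path 0 = [] from rfl, this]
      exact hcon
    | succ n ih =>
      have h2 := (key _ ih).2
      rw [ITree.childs_append] at h2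
      exact h2
  have hpathsucc : ∀ n, path (n + 1) = path n ++ [pick (path n)] := fun n => rfl
  let f : ℕ → Bool := fun n => pick (path n)
  have hrange : ∀ n, (List.range n).map f = path n := by
    intro n
    induction n with
    | zero => rfl
    | succ n ih => rw [List.range_succ, List.map_append, ih, hpathsucc]; rfl
  obtain ⟨n, hn⟩ := hA.2.2 [] f
  apply hn
  have hu := (key _ (hpath n)).1
  have : (A.childs (path n)) [] = A (path n) := by simp [ITree.childs]
  rw [this] at hu
  rw [List.nil_append, hrange n]
  exact hu

/-! ### the three parts -/

lemma treeEq_refl {A : ITree} (hA : A.Wf) : TreeEq A A := by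
  refine ⟨fun X Y => X = Y ∧ X.Wf, ?_, rfl, hA⟩
  rintro X Y ⟨rfl, hX⟩
  obtain ⟨l, hl⟩ := Option.isSome_iff_exists.mp hX.1
  match l, hl with
  | Lab.atom a, hl => exact Or.inl ⟨a, hl, hl⟩
  | Lab.comp, hl =>
    exact Or.inr (Or.inl ⟨hl, hl, ⟨rfl, hX.child hl trivial false⟩,
      ⟨rfl, hX.child hl trivial true⟩⟩)
  | Lab.arr, hl =>
    exact Or.inr (Or.inr (Or.inl ⟨hl, hl, ⟨rfl, hX.child hl trivial false⟩,
      ⟨rfl, hX.child hl trivial true⟩⟩))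
  | Lab.union, hl =>
    refine Or.inr (Or.inr (Or.inr ?_))
    obtain ⟨lc, hlc⟩ := exists_unionComps hX
    have hlen : 2 ≤ lc.length := by
      cases hlc with
      | nonUnion _ h => exact absurd hl h
      | union _ l r _ hlcl hlcr =>
        have h1 := List.length_pos_iff.mpr hlcl.ne_nil
        have h2 := List.length_pos_iff.mpr hlcr.ne_nil
        simp only [List.length_append]; omega
    exact ⟨lc, lc, hlc, hlc, by omega, ⟨id, fun i => ⟨rfl, hlc.wf hX _ (lc.get_mem _)⟩⟩,
      ⟨id, fun j => ⟨rfl, hlc.wf hX _ (lc.get_mem _)⟩⟩⟩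

lemma treeEq_symm {A B : ITree} (h : TreeEq A B) : TreeEq B A := by
  refine ⟨fun X Y => TreeEq Y X, ?_, h⟩
  intro X Y hXY
  rcases hXY.unfold with ⟨a, h1, h2⟩ | ⟨h1, h2, h3, h4⟩ | ⟨h1, h2, h3, h4⟩ |
    ⟨la, lb, hla, hlb, hlen, ⟨f, hf⟩, ⟨g, hg⟩⟩
  · exact Or.inl ⟨a, h2, h1⟩
  · exact Or.inr (Or.inl ⟨h2, h1, h3, h4⟩)
  · exact Or.inr (Or.inr (Or.inl ⟨h2, h1, h3, h4⟩))
  · exact Or.inr (Or.inr (Or.inr ⟨lb, la, hlb, hla, by omega, ⟨g, hg⟩, ⟨f, hf⟩⟩))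

lemma get_singleton (X : ITree) (i : Fin (List.length [X])) : [X].get i = X :=
  match i with | ⟨0, _⟩ => rfl

lemma treeEq_trans {A B C : ITree} (hab : TreeEq A B) (hbc : TreeEq B C) : TreeEq A C := by
  refine ⟨fun X Z => ∃ Y, TreeEq X Y ∧ TreeEq Y Z, ?_, B, hab, hbc⟩
  rintro X Z ⟨Y, hXY, hYZ⟩
  rcases hXY.unfold with ⟨a, hx, hy⟩ | ⟨hx, hy, h3, h4⟩ | ⟨hx, hy, h3, h4⟩ |
    ⟨la, lb, hla, hlb, hlen1, ⟨f1, hf1⟩, ⟨g1, hg1⟩⟩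
  next =>
    rcases hYZ.unfold with ⟨a', hy', hz⟩ | ⟨hy', _⟩ | ⟨hy', _⟩ |
      ⟨lb', lc, hlb', hlc, hlen2, ⟨f2, hf2⟩, ⟨g2, hg2⟩⟩
    · rw [hy] at hy'; injection hy' with hy2; injection hy2 with hy3
      exact Or.inl ⟨a, hx, hy3 ▸ hz⟩
    · rw [hy] at hy'; simp at hy'
    · rw [hy] at hy'; simp at hy'
    · have hb' : lb' = [Y] := hlb'.of_nonUnion (by simp [hy])
      subst hb'
      refine Or.inr (Or.inr (Or.inr ⟨[X], lc, UnionComps.nonUnion X (by simp [hx]), hlc,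
        by simp at hlen2 ⊢; omega, ?_, ?_⟩))
      · refine ⟨fun _ => f2 ⟨0, by simp⟩, fun i => ?_⟩
        rw [get_singleton]
        have h5 := hf2 ⟨0, by simp⟩
        rw [get_singleton] at h5
        exact ⟨Y, hXY, h5⟩
      · refine ⟨fun _ => ⟨0, by simp⟩, fun j => ?_⟩
        rw [get_singleton]
        have h5 := hg2 j
        rw [get_singleton] at h5
        exact ⟨Y, hXY, h5⟩
  next =>
    rcases hYZ.unfold with ⟨a', hy', hz⟩ | ⟨hy', hz, h3', h4'⟩ | ⟨hy', _⟩ |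
      ⟨lb', lc, hlb', hlc, hlen2, ⟨f2, hf2⟩, ⟨g2, hg2⟩⟩
    · rw [hy] at hy'; simp at hy'
    · exact Or.inr (Or.inl ⟨hx, hz, ⟨_, h3, h3'⟩, ⟨_, h4, h4'⟩⟩)
    · rw [hy] at hy'; simp at hy'
    · have hb' : lb' = [Y] := hlb'.of_nonUnion (by simp [hy])
      subst hb'
      refine Or.inr (Or.inr (Or.inr ⟨[X], lc, UnionComps.nonUnion X (by simp [hx]), hlc,
        by simp at hlen2 ⊢; omega, ?_, ?_⟩))
      · refine ⟨fun _ => f2 ⟨0, by simp⟩, fun i => ?_⟩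
        rw [get_singleton]
        have h5 := hf2 ⟨0, by simp⟩
        rw [get_singleton] at h5
        exact ⟨Y, hXY, h5⟩
      · refine ⟨fun _ => ⟨0, by simp⟩, fun j => ?_⟩
        rw [get_singleton]
        have h5 := hg2 j
        rw [get_singleton] at h5
        exact ⟨Y, hXY, h5⟩
  next =>
    rcases hYZ.unfold with ⟨a', hy', hz⟩ | ⟨hy', _⟩ | ⟨hy', hz, h3', h4'⟩ |
      ⟨lb', lc, hlb', hlc, hlen2, ⟨f2, hf2⟩, ⟨g2, hg2⟩⟩
    · rw [hy] at hy'; simp at hy'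
    · rw [hy] at hy'; simp at hy'
    · exact Or.inr (Or.inr (Or.inl ⟨hx, hz, ⟨_, h3, h3'⟩, ⟨_, h4, h4'⟩⟩))
    · have hb' : lb' = [Y] := hlb'.of_nonUnion (by simp [hy])
      subst hb'
      refine Or.inr (Or.inr (Or.inr ⟨[X], lc, UnionComps.nonUnion X (by simp [hx]), hlc,
        by simp at hlen2 ⊢; omega, ?_, ?_⟩))
      · refine ⟨fun _ => f2 ⟨0, by simp⟩, fun i => ?_⟩
        rw [get_singleton]
        have h5 := hf2 ⟨0, by simp⟩
        rw [get_singleton] at h5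
        exact ⟨Y, hXY, h5⟩
      · refine ⟨fun _ => ⟨0, by simp⟩, fun j => ?_⟩
        rw [get_singleton]
        have h5 := hg2 j
        rw [get_singleton] at h5
        exact ⟨Y, hXY, h5⟩
  next =>
    rcases hYZ.unfold with ⟨a', hy', hz⟩ | ⟨hy', hz, h3', h4'⟩ | ⟨hy', hz, h3', h4'⟩ |
      ⟨lb', lc, hlb', hlc, hlen2, ⟨f2, hf2⟩, ⟨g2, hg2⟩⟩
    · have hb : lb = [Y] := hlb.of_nonUnion (by simp [hy'])
      subst hb
      refine Or.inr (Or.inr (Or.inr ⟨la, [Z], hla, UnionComps.nonUnion Z (by simp [hz]),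
        by simp at hlen1 ⊢; omega, ?_, ?_⟩))
      · refine ⟨fun _ => ⟨0, by simp⟩, fun i => ?_⟩
        rw [get_singleton]
        have h5 := hf1 i
        rw [get_singleton] at h5
        exact ⟨Y, h5, hYZ⟩
      · refine ⟨fun _ => g1 ⟨0, by simp⟩, fun j => ?_⟩
        rw [get_singleton]
        have h5 := hg1 ⟨0, by simp⟩
        rw [get_singleton] at h5
        exact ⟨Y, h5, hYZ⟩
    · have hb : lb = [Y] := hlb.of_nonUnion (by simp [hy'])
      subst hb
      refine Or.inr (Or.inr (Or.inr ⟨la, [Z], hla, UnionComps.nonUnion Z (by simp [hz]),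
        by simp at hlen1 ⊢; omega, ?_, ?_⟩))
      · refine ⟨fun _ => ⟨0, by simp⟩, fun i => ?_⟩
        rw [get_singleton]
        have h5 := hf1 i
        rw [get_singleton] at h5
        exact ⟨Y, h5, hYZ⟩
      · refine ⟨fun _ => g1 ⟨0, by simp⟩, fun j => ?_⟩
        rw [get_singleton]
        have h5 := hg1 ⟨0, by simp⟩
        rw [get_singleton] at h5
        exact ⟨Y, h5, hYZ⟩
    · have hb : lb = [Y] := hlb.of_nonUnion (by simp [hy'])
      subst hb
      refine Or.inr (Or.inr (Or.inr ⟨la, [Z], hla, UnionComps.nonUnion Z (by simp [hz]),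
        by simp at hlen1 ⊢; omega, ?_, ?_⟩))
      · refine ⟨fun _ => ⟨0, by simp⟩, fun i => ?_⟩
        rw [get_singleton]
        have h5 := hf1 i
        rw [get_singleton] at h5
        exact ⟨Y, h5, hYZ⟩
      · refine ⟨fun _ => g1 ⟨0, by simp⟩, fun j => ?_⟩
        rw [get_singleton]
        have h5 := hg1 ⟨0, by simp⟩
        rw [get_singleton] at h5
        exact ⟨Y, h5, hYZ⟩
    · -- both union clauses
      have hbb : lb = lb' := hlb.unique hlb'
      subst hbb
      by_cases hdeg : 2 < la.length + lc.length
      · exact Or.inr (Or.inr (Or.inr ⟨la, lc, hla, hlc, hdeg,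
          ⟨fun i => f2 (f1 i), fun i => ⟨lb.get (f1 i), hf1 i, hf2 (f1 i)⟩⟩,
          ⟨fun j => g1 (g2 j), fun j => ⟨lb.get (g2 j), hg1 (g2 j), hg2 j⟩⟩⟩))
      · -- degenerate: la and lc are singletons
        have hpa := List.length_pos_iff.mpr hla.ne_nil
        have hpc := List.length_pos_iff.mpr hlc.ne_nil
        have hla1 : la.length = 1 := by omega
        have hlc1 : lc.length = 1 := by omega
        obtain ⟨W, hW⟩ := List.length_eq_one_iff.mp hla1
        obtain ⟨V, hV⟩ := List.length_eq_one_iff.mp hlc1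
        subst hW; subst hV
        obtain ⟨rfl, hXnu⟩ := hla.singleton
        obtain ⟨rfl, hZnu⟩ := hlc.singleton
        have hlb2 : 2 ≤ lb.length := by simp at hlen1; omega
        have hXB : TreeEq W (lb.get ⟨0, by omega⟩) := by
          have h5 := hg1 ⟨0, by omega⟩
          rwa [get_singleton] at h5
        have hBZ : TreeEq (lb.get ⟨0, by omega⟩) V := by
          have h5 := hf2 ⟨0, by omega⟩
          rwa [get_singleton] at h5
        have hBnu : (lb.get ⟨0, by omega⟩) [] ≠ some Lab.union :=
          hlb.comp_nonUnion _ (lb.get_mem _)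
        rcases hXB.structural hXnu hBnu with ⟨a, hx, hb⟩ | ⟨hx, hb, hc1, hc2⟩ | ⟨hx, hb, hc1, hc2⟩ <;>
          rcases hBZ.structural hBnu hZnu with ⟨a', hb', hz⟩ | ⟨hb', hz, hc1', hc2'⟩ | ⟨hb', hz, hc1', hc2'⟩
        · rw [hb] at hb'; injection hb' with h6; injection h6 with h6
          exact Or.inl ⟨a, hx, h6 ▸ hz⟩
        · rw [hb] at hb'; simp at hb'
        · rw [hb] at hb'; simp at hb'
        · rw [hb] at hb'; simp at hb'
        · exact Or.inr (Or.inl ⟨hx, hz, ⟨_, hc1, hc1'⟩, ⟨_, hc2, hc2'⟩⟩)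
        · rw [hb] at hb'; simp at hb'
        · rw [hb] at hb'; simp at hb'
        · rw [hb] at hb'; simp at hb'
        · exact Or.inr (Or.inr (Or.inl ⟨hx, hz, ⟨_, hc1, hc1'⟩, ⟨_, hc2, hc2'⟩⟩))

/-- coinductive tree equivalence ≈_T is an equivalence relation on
well-formed infinite types. -/
theorem stmt4 :
    (∀ A : ITree, A.Wf → TreeEq A A) ∧
    (∀ A B : ITree, A.Wf → B.Wf → TreeEq A B → TreeEq B A) ∧
    (∀ A B C : ITree, A.Wf → B.Wf → C.Wf → TreeEq A B → TreeEq B C → TreeEq A C) := by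
  exact ⟨fun _ h => treeEq_refl h, fun _ _ _ _ h => treeEq_symm h,
    fun _ _ _ _ _ _ h1 h2 => treeEq_trans h1 h2⟩

end CAP
end
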